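/- If m ≥ 2, q ≥ 1, r ≥ 1 are integers and f ≥ 1 satisfies, with n = m+f-1, (1/r)∑_{i=m}^{n} 1/i < q < (1/r)∑_{i=m}^{n+1} 1/i, then either ⌈m(e^{qr}-1) - e^{qr}⌉ ≤ f ≤ ⌊m(e^{qr}-1) - e^{qr}/2⌋ or ⌊m(e^{qr}-1) - e^{qr}/2⌋ + 1 ≤ f ≤ ⌊m(e^{qr}-1)⌋. -/

import Mathlib

lemma tel_log (a b : ℕ) (h : a ≤ b + 1) :
    ∑ i ∈ Finset.Icc a b, (Real.log (i + 1) - Real.log i)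
      = Real.log (b + 1) - Real.log a := by
  induction b with
  | zero =>
    interval_cases a <;> simp
  | succ b ih =>
    rcases Nat.lt_or_ge a (b + 2) with h' | h'
    · have ha : a ≤ b + 1 := Nat.lt_succ_iff.mp h'
      rw [Finset.sum_Icc_succ_top ha, ih ha]
      push_cast
      ring
    · have : a = b + 2 := le_antisymm h h'
      subst this
      have : ((b : ℝ) + 1 + 1) = ((b : ℝ) + 2) := by ring
      simp [this]

lemma sum_lb (a b : ℕ) (ha : 1 ≤ a) (h : a ≤ b + 1) :
    Real.log (b + 1) - Real.log a ≤ ∑ i ∈ Finset.Icc a b, (1 : ℝ) / i := by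
  rw [← tel_log a b h]
  apply Finset.sum_le_sum
  intro i hi
  have hi1 : 1 ≤ i := le_trans ha (Finset.mem_Icc.mp hi).1
  have hipos : (0 : ℝ) < i := by exact_mod_cast hi1
  have h1 := Real.log_le_sub_one_of_pos (x := ((i : ℝ) + 1) / i) (by positivity)
  have hlog : Real.log (((i : ℝ) + 1) / i) = Real.log ((i : ℝ) + 1) - Real.log i :=
    Real.log_div (by positivity) (ne_of_gt hipos)
  rw [hlog] at h1
  have h2 : ((i : ℝ) + 1) / i - 1 = 1 / i := by field_simp; ring
  linarith

lemma sum_ub (a b : ℕ) (ha : 2 ≤ a) (h : a ≤ b) :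
    ∑ i ∈ Finset.Icc a b, (1 : ℝ) / i ≤ Real.log b - Real.log ((a : ℝ) - 1) := by
  have key : ∀ i ∈ Finset.Icc a b, (1 : ℝ) / i ≤ Real.log i - Real.log ((i : ℝ) - 1) := by
    intro i hi
    have hi2 : 2 ≤ i := le_trans ha (Finset.mem_Icc.mp hi).1
    have hipos : (0 : ℝ) < i := by positivity
    have him : (0 : ℝ) < (i : ℝ) - 1 := by
      have : (2 : ℝ) ≤ i := by exact_mod_cast hi2
      linarith
    have h1 := Real.log_le_sub_one_of_pos (x := ((i : ℝ) - 1) / i) (by positivity)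
    have hlog : Real.log (((i : ℝ) - 1) / i) = Real.log ((i : ℝ) - 1) - Real.log i :=
      Real.log_div (ne_of_gt him) (ne_of_gt hipos)
    rw [hlog] at h1
    have h2 : ((i : ℝ) - 1) / i - 1 = -(1 / i) := by field_simp; ring
    linarith
  calc ∑ i ∈ Finset.Icc a b, (1 : ℝ) / i
      ≤ ∑ i ∈ Finset.Icc a b, (Real.log i - Real.log ((i : ℝ) - 1)) :=
        Finset.sum_le_sum key
    _ = Real.log b - Real.log ((a : ℝ) - 1) := by
        have hmap : Finset.Icc a b = (Finset.Icc (a - 1) (b - 1)).map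
            (addRightEmbedding 1) := by
          rw [Finset.map_add_right_Icc]
          congr 1 <;> omega
        rw [hmap, Finset.sum_map]
        have hcongr : ∀ j ∈ Finset.Icc (a - 1) (b - 1),
            (Real.log (((addRightEmbedding 1) j : ℕ) : ℝ) -
              Real.log ((((addRightEmbedding 1) j : ℕ) : ℝ) - 1))
            = Real.log ((j : ℝ) + 1) - Real.log j := by
          intro j hj
          simp only [addRightEmbedding_apply]
          push_cast
          ring_nf
        rw [Finset.sum_congr rfl hcongr, tel_log (a - 1) (b - 1) (by omega)]
        have hb : ((b - 1 : ℕ) : ℝ) + 1 = (b : ℝ) := by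
          have : 1 ≤ b := by omega
          push_cast [this]
          ring
        have ha' : ((a - 1 : ℕ) : ℝ) = (a : ℝ) - 1 := by
          have : 1 ≤ a := by omega
          push_cast [this]
          ring
        rw [hb, ha']

theorem stmt16 (m q r f n : ℕ) (hm : 2 ≤ m) (hq : 1 ≤ q) (hr : 1 ≤ r) (hf : 1 ≤ f)
    (hn : n = m + f - 1)
    (h1 : (1 / (r : ℝ)) * (∑ i ∈ Finset.Icc m n, (1 : ℝ) / i) < q)
    (h2 : (q : ℝ) < (1 / (r : ℝ)) * ∑ i ∈ Finset.Icc m (n + 1), (1 : ℝ) / i) :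
    (⌈(m : ℝ) * (Real.exp (q * r) - 1) - Real.exp (q * r)⌉ ≤ (f : ℤ) ∧
      (f : ℤ) ≤ ⌊(m : ℝ) * (Real.exp (q * r) - 1) - Real.exp (q * r) / 2⌋) ∨
    (⌊(m : ℝ) * (Real.exp (q * r) - 1) - Real.exp (q * r) / 2⌋ + 1 ≤ (f : ℤ) ∧
      (f : ℤ) ≤ ⌊(m : ℝ) * (Real.exp (q * r) - 1)⌋) := by
  have hrpos : (0 : ℝ) < r := by exact_mod_cast hr
  set E := Real.exp ((q : ℝ) * r) with hE
  have hn1 : n + 1 = m + f := by omega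
  have hmpos : (0 : ℝ) < m := by positivity
  have hm1 : (1 : ℝ) ≤ (m : ℝ) - 1 := by
    have : (2 : ℝ) ≤ m := by exact_mod_cast hm
    linarith
  -- clear the 1/r factor
  have hS1 : (∑ i ∈ Finset.Icc m n, (1 : ℝ) / i) < (q : ℝ) * r := by
    have h := mul_lt_mul_of_pos_left h1 hrpos
    have he : (r : ℝ) * ((1 / r) * ∑ i ∈ Finset.Icc m n, (1 : ℝ) / i)
        = ∑ i ∈ Finset.Icc m n, (1 : ℝ) / i := by
      field_simp
    rw [he] at h
    linarith
  have hS2 : (q : ℝ) * r < ∑ i ∈ Finset.Icc m (n + 1), (1 : ℝ) / i := by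
    have h := mul_lt_mul_of_pos_left h2 hrpos
    have he : (r : ℝ) * ((1 / r) * ∑ i ∈ Finset.Icc m (n + 1), (1 : ℝ) / i)
        = ∑ i ∈ Finset.Icc m (n + 1), (1 : ℝ) / i := by
      field_simp
    rw [he] at h
    linarith
  -- lower bound on sum gives f < m (E - 1)
  have hlb := sum_lb m n (by omega) (by omega)
  have hlog1 : Real.log ((n : ℝ) + 1) - Real.log m < (q : ℝ) * r := lt_of_le_of_lt hlb hS1
  have hnm : ((n : ℝ) + 1) = (m : ℝ) + f := by exact_mod_cast hn1
  have hfr : (m : ℝ) + f < m * E := by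
    have hpos : (0 : ℝ) < ((n : ℝ) + 1) / m := by
      rw [hnm]; positivity
    have hlogd : Real.log (((n : ℝ) + 1) / m) < (q : ℝ) * r := by
      rw [Real.log_div (by rw [hnm]; positivity) (ne_of_gt hmpos)]
      exact hlog1
    have hxe : ((n : ℝ) + 1) / m < E := by
      calc ((n : ℝ) + 1) / m = Real.exp (Real.log (((n : ℝ) + 1) / m)) :=
            (Real.exp_log hpos).symm
        _ < E := Real.exp_lt_exp.mpr hlogd
    have := (div_lt_iff₀ hmpos).mp hxe
    rw [hnm] at this
    linarith
  -- upper bound on sum gives m (E - 1) - E < f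
  have hub := sum_ub m (n + 1) hm (by omega)
  have hlog2 : (q : ℝ) * r < Real.log ((n : ℝ) + 1) - Real.log ((m : ℝ) - 1) := by
    have : Real.log ((n : ℝ) + 1 : ℝ) = Real.log (((n + 1 : ℕ) : ℝ)) := by push_cast; ring_nf
    calc (q : ℝ) * r < ∑ i ∈ Finset.Icc m (n + 1), (1 : ℝ) / i := hS2
      _ ≤ Real.log ((n + 1 : ℕ) : ℝ) - Real.log ((m : ℝ) - 1) := hub
      _ = Real.log ((n : ℝ) + 1) - Real.log ((m : ℝ) - 1) := by push_cast; ring_nf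
  have hfr2 : ((m : ℝ) - 1) * E < (m : ℝ) + f := by
    have hm1pos : (0 : ℝ) < (m : ℝ) - 1 := by linarith
    have hpos : (0 : ℝ) < ((n : ℝ) + 1) / ((m : ℝ) - 1) := by
      rw [hnm]; positivity
    have hlogd : (q : ℝ) * r < Real.log (((n : ℝ) + 1) / ((m : ℝ) - 1)) := by
      rw [Real.log_div (by rw [hnm]; positivity) (ne_of_gt hm1pos)]
      exact hlog2
    have hxe : E < ((n : ℝ) + 1) / ((m : ℝ) - 1) := by
      calc E < Real.exp (Real.log (((n : ℝ) + 1) / ((m : ℝ) - 1))) :=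
            Real.exp_lt_exp.mpr hlogd
        _ = ((n : ℝ) + 1) / ((m : ℝ) - 1) := Real.exp_log hpos
    have := (lt_div_iff₀ hm1pos).mp hxe
    rw [hnm] at this
    linarith
  have hup : (f : ℤ) ≤ ⌊(m : ℝ) * (E - 1)⌋ := by
    apply Int.le_floor.mpr
    push_cast
    nlinarith
  have hlo : ⌈(m : ℝ) * (E - 1) - E⌉ ≤ (f : ℤ) := by
    apply Int.ceil_le.mpr
    push_cast
    nlinarith
  by_cases hc : (f : ℤ) ≤ ⌊(m : ℝ) * (E - 1) - E / 2⌋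
  · exact Or.inl ⟨hlo, hc⟩
  · exact Or.inr ⟨by omega, hup⟩
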